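/- Let k be a field and a < b, c < d in ℝ. Then Ext¹_gr(k[a,b), k[c,d)) ≅ k[c−b, min{c−a, d−b}). -/

import Mathlib

open CategoryTheory

noncomputable section
attribute [local instance] Classical.propDecidable
set_option linter.unusedSectionVars false

variable (R : Type) [Ring R] {P : Type} [Preorder P]

/-- Condition that a subset is order-convex. -/
def IsConvexSet (I : Set P) : Prop := ∀ ⦃x y z : P⦄, x ∈ I → z ∈ I → x ≤ y → y ≤ z → y ∈ I

/-- The value of the interval persistence module at a point. -/
def intervalObj (I : Set P) (a : P) : Submodule R R :=
  if a ∈ I then (⊤ : Submodule R R) else ⊥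

lemma intervalObj_eq_zero {I : Set P} {a : P} (h : a ∉ I) (x : intervalObj R I a) :
    x = 0 := by
  have hx := x.2
  simp only [intervalObj, if_neg h, Submodule.mem_bot] at hx
  exact Subtype.ext hx

/-- The structure map of the interval module between two degrees. -/
def intervalMapAux (I : Set P) (a b : P) :
    (intervalObj R I a) →ₗ[R] (intervalObj R I b) :=
  if h : a ∈ I ∧ b ∈ I then
    Submodule.inclusion (by simp [intervalObj, h.1, h.2])
  else 0

lemma intervalMapAux_coe {I : Set P} {a b : P} (ha : a ∈ I) (hb : b ∈ I)
    (x : intervalObj R I a) : ((intervalMapAux R I a b x : R)) = (x : R) := by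
  simp [intervalMapAux, ha, hb]

lemma intervalMapAux_of_not {I : Set P} {a b : P} (h : ¬(a ∈ I ∧ b ∈ I))
    (x : intervalObj R I a) : intervalMapAux R I a b x = 0 := by
  simp [intervalMapAux, h]

/-- The interval (indicator) persistence module of a convex set `I`,
as a functor from the preorder `P` to `R`-modules. -/
def intervalModule (I : Set P) (hI : IsConvexSet I) : P ⥤ ModuleCat R where
  obj a := ModuleCat.of R (intervalObj R I a)
  map {a b} f := ModuleCat.ofHom (intervalMapAux R I a b)
  map_id a := by
    apply ModuleCat.hom_ext; apply LinearMap.ext; intro (x : intervalObj R I a)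
    by_cases h : a ∈ I
    · exact Subtype.ext (intervalMapAux_coe R h h x)
    · rw [intervalObj_eq_zero R h x]
      simp
  map_comp {a b c} f g := by
    apply ModuleCat.hom_ext; apply LinearMap.ext; intro (x : intervalObj R I a)
    show intervalMapAux R I a c x = intervalMapAux R I b c (intervalMapAux R I a b x)
    by_cases ha : a ∈ I
    · by_cases hc : c ∈ I
      · have hb : b ∈ I := hI ha hc (leOfHom f) (leOfHom g)
        apply Subtype.ext
        rw [intervalMapAux_coe R ha hc, intervalMapAux_coe R hb hc,
          intervalMapAux_coe R ha hb]
      · rw [intervalMapAux_of_not R (fun h => hc h.2),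
          intervalMapAux_of_not R (fun h => hc h.2)]
    · rw [intervalObj_eq_zero R ha x]
      simp

end

lemma IsConvexSet.of_ordConnected {P : Type} [Preorder P] {s : Set P}
    (h : s.OrdConnected) : IsConvexSet s :=
  fun _ _ _ hx hz hxy hyz => h.out hx hz ⟨hxy, hyz⟩

open CategoryTheory

noncomputable section
variable (k : Type) [Field k]

/-- The translation functor `a ↦ a + s` on `(ℝ,≤)`. -/
def shiftFunctor' (s : ℝ) : ℝ ⥤ ℝ :=
  Monotone.functor (f := fun a => a + s) (fun _ _ h => add_le_add_left h s)

/-- For `s ≤ t`, the canonical natural transformation `N(s) ⟶ N(t)` between shifts. -/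
def shiftTrans (N : ℝ ⥤ ModuleCat k) {s t : ℝ} (h : s ≤ t) :
    shiftFunctor' s ⋙ N ⟶ shiftFunctor' t ⋙ N where
  app a := N.map (homOfLE (add_le_add_right h a))
  naturality {a b} f := by
    dsimp [shiftFunctor']
    rw [← N.map_comp, ← N.map_comp]
    congr 1

lemma shiftTrans_eq_id (N : ℝ ⥤ ModuleCat k) {s : ℝ} (h : s ≤ s) :
    shiftTrans k N h = 𝟙 _ := by
  apply NatTrans.ext
  funext a
  show N.map (homOfLE (add_le_add_right h a)) = _
  rw [show (homOfLE (add_le_add_right h a) : a + s ⟶ a + s) = 𝟙 (a + s) from rfl, N.map_id]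
  rfl

lemma shiftTrans_comp (N : ℝ ⥤ ModuleCat k) {s t u : ℝ} (h : s ≤ t) (h' : t ≤ u)
    (h'' : s ≤ u) :
    shiftTrans k N h ≫ shiftTrans k N h' = shiftTrans k N h'' := by
  apply NatTrans.ext
  funext a
  rw [NatTrans.comp_app]
  show N.map (homOfLE (add_le_add_right h a)) ≫ N.map (homOfLE (add_le_add_right h' a)) =
    N.map (homOfLE (add_le_add_right h'' a))
  rw [← N.map_comp]
  congr 1

/-- The graded internal hom of persistence modules:
`Hom(M,N)_s = Hom(M, N(s))`, the space of natural transformations into the shift. -/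
def homUnderline (M N : ℝ ⥤ ModuleCat k) : ℝ ⥤ ModuleCat k where
  obj s := ModuleCat.of k (M ⟶ shiftFunctor' s ⋙ N)
  map {s t} f := ModuleCat.ofHom
    { toFun := fun α => α ≫ shiftTrans k N (leOfHom f)
      map_add' := fun α β => Preadditive.add_comp _ _ _ _ _ _
      map_smul' := fun c α => Linear.smul_comp _ _ _ _ _ _ }
  map_id s := by
    apply ModuleCat.hom_ext; apply LinearMap.ext; intro (α : M ⟶ shiftFunctor' s ⋙ N)
    show α ≫ shiftTrans k N (leOfHom (𝟙 s)) = α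
    rw [shiftTrans_eq_id, Category.comp_id]
  map_comp {s t u} f g := by
    apply ModuleCat.hom_ext; apply LinearMap.ext; intro (α : M ⟶ shiftFunctor' s ⋙ N)
    show α ≫ shiftTrans k N (leOfHom (f ≫ g)) =
      (α ≫ shiftTrans k N (leOfHom f)) ≫ shiftTrans k N (leOfHom g)
    rw [Category.assoc, shiftTrans_comp k N (leOfHom f) (leOfHom g) (leOfHom (f ≫ g))]

end

open CategoryTheory

noncomputable section
variable (k : Type) [Field k]

lemma shiftTrans_whiskerLeft {N N' : ℝ ⥤ ModuleCat k} (φ : N ⟶ N') {s t : ℝ}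
    (h : s ≤ t) :
    shiftTrans k N h ≫ Functor.whiskerLeft (shiftFunctor' t) φ =
      Functor.whiskerLeft (shiftFunctor' s) φ ≫ shiftTrans k N' h := by
  apply NatTrans.ext
  funext a
  rw [NatTrans.comp_app, NatTrans.comp_app]
  show N.map (homOfLE (add_le_add_right h a)) ≫ φ.app (a + t) =
    φ.app (a + s) ≫ N'.map (homOfLE (add_le_add_right h a))
  exact φ.naturality _

/-- Functoriality of the graded internal hom in the second variable. -/
def homUnderlineMap (M : ℝ ⥤ ModuleCat k) {N N' : ℝ ⥤ ModuleCat k} (φ : N ⟶ N') :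
    homUnderline k M N ⟶ homUnderline k M N' where
  app s := ModuleCat.ofHom
    { toFun := fun α => α ≫ Functor.whiskerLeft (shiftFunctor' s) φ
      map_add' := fun α β => Preadditive.add_comp _ _ _ _ _ _
      map_smul' := fun c α => Linear.smul_comp _ _ _ _ _ _ }
  naturality {s t} f := by
    apply ModuleCat.hom_ext; apply LinearMap.ext; intro (α : M ⟶ shiftFunctor' s ⋙ N)
    show (α ≫ shiftTrans k N (leOfHom f)) ≫ Functor.whiskerLeft (shiftFunctor' t) φ =
      (α ≫ Functor.whiskerLeft (shiftFunctor' s) φ) ≫ shiftTrans k N' (leOfHom f)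
    rw [Category.assoc, Category.assoc, shiftTrans_whiskerLeft]

end

open CategoryTheory

noncomputable section
attribute [local instance] Classical.propDecidable
set_option linter.unusedSectionVars false
variable (R : Type) [Ring R] {P : Type} [Preorder P]

/-- The degreewise component of a morphism between interval modules. -/
def intervalCross (I J : Set P) (a : P) :
    (intervalObj R I a) →ₗ[R] (intervalObj R J a) :=
  if h : a ∈ I ∧ a ∈ J then
    Submodule.inclusion (by simp [intervalObj, h.1, h.2])
  else 0

lemma intervalCross_coe {I J : Set P} {a : P} (hI : a ∈ I) (hJ : a ∈ J)
    (x : intervalObj R I a) : ((intervalCross R I J a x : R)) = (x : R) := by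
  simp [intervalCross, hI, hJ]

lemma intervalCross_of_not {I J : Set P} {a : P} (h : ¬(a ∈ I ∧ a ∈ J))
    (x : intervalObj R I a) : intervalCross R I J a x = 0 := by
  simp [intervalCross, h]

/-- The canonical morphism of interval persistence modules, whose component at a point
in `I ∩ J` is the identity of `R` and which is zero elsewhere.  The hypothesis `hcond`
is exactly the condition making this family of maps natural. -/
def intervalHom (I J : Set P) (hI : IsConvexSet I) (hJ : IsConvexSet J)
    (hcond : ∀ ⦃x y : P⦄, x ≤ y → x ∈ I → y ∈ J → (y ∈ I ↔ x ∈ J)) :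
    intervalModule R I hI ⟶ intervalModule R J hJ where
  app a := ModuleCat.ofHom (intervalCross R I J a)
  naturality {a b} f := by
    apply ModuleCat.hom_ext; apply LinearMap.ext; intro (x : intervalObj R I a)
    show intervalCross R I J b (intervalMapAux R I a b x) =
      intervalMapAux R J a b (intervalCross R I J a x)
    by_cases ha : a ∈ I
    · by_cases hbJ : b ∈ J
      · have hiff := hcond (leOfHom f) ha hbJ
        by_cases hbI : b ∈ I
        · have haJ : a ∈ J := hiff.mp hbI
          apply Subtype.ext
          rw [intervalCross_coe R hbI hbJ, intervalMapAux_coe R ha hbI,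
            intervalMapAux_coe R haJ hbJ, intervalCross_coe R ha haJ]
        · have haJ : a ∉ J := fun h => hbI (hiff.mpr h)
          rw [intervalCross_of_not R (fun h => hbI h.1),
            intervalCross_of_not R (fun h => haJ h.2)]
          simp
      · rw [intervalCross_of_not R (fun h => hbJ h.2),
          intervalMapAux_of_not R (fun h => hbJ h.2)]
    · rw [intervalObj_eq_zero R ha x]
      simp

end

open CategoryTheory

noncomputable section PExtAux
attribute [local instance] Classical.propDecidable
set_option linter.unusedSectionVars false

namespace PExt

variable (k : Type) [Field k]

/-- The generator of the interval module at a point of the interval. -/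
def gen {I : Set ℝ} {t : ℝ} (h : t ∈ I) : intervalObj k I t :=
  ⟨1, by rw [intervalObj, if_pos h]; trivial⟩

variable (a b c d : ℝ)

lemma memA (hab : a < b) : a ∈ Set.Ico a b := ⟨le_refl a, hab⟩

/-- A natural transformation out of `k[a,b)` vanishing on the generator at `a` is zero. -/
lemma natTrans_eq_zero (hab : a < b) {F : ℝ ⥤ ModuleCat k}
    (α : intervalModule k (Set.Ico a b) (.of_ordConnected Set.ordConnected_Ico) ⟶ F)
    (h0 : α.app a (gen k (memA a b hab)) = 0) : α = 0 := by
  apply NatTrans.ext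
  funext t
  apply ModuleCat.hom_ext
  apply LinearMap.ext
  intro (x : intervalObj k (Set.Ico a b) t)
  show α.app t x = 0
  by_cases ht : t ∈ Set.Ico a b
  · have hat : a ≤ t := ht.1
    have hnat : α.app t ((intervalModule k (Set.Ico a b)
        (.of_ordConnected Set.ordConnected_Ico)).map (homOfLE hat)
        ((x.1 : k) • gen k (memA a b hab))) =
        F.map (homOfLE hat) (α.app a ((x.1 : k) • gen k (memA a b hab))) :=
      ConcreteCategory.congr_hom (α.naturality (homOfLE hat)) ((x.1 : k) • gen k (memA a b hab))
    have hx : (intervalModule k (Set.Ico a b)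
        (.of_ordConnected Set.ordConnected_Ico)).map (homOfLE hat)
        ((x.1 : k) • gen k (memA a b hab)) = x := by
      apply Subtype.ext
      calc ((intervalMapAux k (Set.Ico a b) a t ((x.1 : k) • gen k (memA a b hab)) : k))
          = (((x.1 : k) • gen k (memA a b hab) : intervalObj k (Set.Ico a b) a) : k) :=
            intervalMapAux_coe k (memA a b hab) ht _
        _ = (x.1 : k) := by show (x.1 : k) * 1 = (x.1 : k); ring
    rw [hx] at hnat
    rw [hnat]
    exact (congrArg (ConcreteCategory.hom (F.map (homOfLE hat)))
      ((map_smul (ConcreteCategory.hom (α.app a)) (x.1 : k) (gen k (memA a b hab))).trans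
        ((congrArg ((x.1 : k) • ·) h0).trans (smul_zero _)))).trans (map_zero _)
  · rw [intervalObj_eq_zero k ht x]
    exact map_zero _

/-- If `b + s < e` then any `α : k[a,b) ⟶ k(−∞,e)(s)` kills the generator at `a`. -/
lemma app_gen_zero_of_lt (hab : a < b) {e s : ℝ} (hbs : b + s < e)
    (α : intervalModule k (Set.Ico a b) (.of_ordConnected Set.ordConnected_Ico) ⟶
      shiftFunctor' s ⋙ intervalModule k (Set.Iio e) (.of_ordConnected Set.ordConnected_Iio)) :
    α.app a (gen k (memA a b hab)) = 0 := by
  have hnat : α.app b ((intervalModule k (Set.Ico a b)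
      (.of_ordConnected Set.ordConnected_Ico)).map (homOfLE hab.le)
      (gen k (memA a b hab))) =
      (shiftFunctor' s ⋙ intervalModule k (Set.Iio e)
        (.of_ordConnected Set.ordConnected_Iio)).map (homOfLE hab.le)
        (α.app a (gen k (memA a b hab))) :=
    ConcreteCategory.congr_hom (α.naturality (homOfLE hab.le)) (gen k (memA a b hab))
  have h1 : (intervalModule k (Set.Ico a b)
      (.of_ordConnected Set.ordConnected_Ico)).map (homOfLE hab.le)
      (gen k (memA a b hab)) = 0 :=
    intervalMapAux_of_not k (I := Set.Ico a b) (a := a) (b := b) (fun h => lt_irrefl b h.2.2) _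
  rw [h1, map_zero] at hnat
  have has : a + s ∈ Set.Iio e := by
    simp only [Set.mem_Iio]; linarith
  have hbs' : b + s ∈ Set.Iio e := by
    simp only [Set.mem_Iio]; linarith
  apply Subtype.ext
  calc ((α.app a (gen k (memA a b hab))).1 : k)
      = ((intervalMapAux k (Set.Iio e) (a + s) (b + s) (α.app a (gen k (memA a b hab))) : k)) :=
        (intervalMapAux_coe k has hbs' _).symm
    _ = (((shiftFunctor' s ⋙ intervalModule k (Set.Iio e)
          (.of_ordConnected Set.ordConnected_Iio)).map (homOfLE hab.le)
          (α.app a (gen k (memA a b hab)))).1 : k) := rfl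
    _ = 0 := by rw [← hnat]; rfl

/-- The shifted cross map between interval modules. -/
def crossS (I J : Set ℝ) (s t : ℝ) : intervalObj k I t →ₗ[k] intervalObj k J (t + s) :=
  if h : t ∈ I ∧ t + s ∈ J then
    Submodule.inclusion (by simp [intervalObj, h.1, h.2])
  else 0

lemma crossS_coe {I J : Set ℝ} {s t : ℝ} (hI : t ∈ I) (hJ : t + s ∈ J)
    (x : intervalObj k I t) : ((crossS k I J s t x : k)) = (x : k) := by
  simp [crossS, hI, hJ]

lemma crossS_of_not {I J : Set ℝ} {s t : ℝ} (h : ¬(t ∈ I ∧ t + s ∈ J))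
    (x : intervalObj k I t) : crossS k I J s t x = 0 := by
  simp [crossS, h]

/-- The canonical morphism from an interval module to the `s`-shift of another one. -/
def homShift (I J : Set ℝ) (hI : IsConvexSet I) (hJ : IsConvexSet J) (s : ℝ)
    (hcond : ∀ ⦃x y : ℝ⦄, x ≤ y → x ∈ I → y + s ∈ J → (y ∈ I ↔ x + s ∈ J)) :
    intervalModule k I hI ⟶ shiftFunctor' s ⋙ intervalModule k J hJ where
  app t := ModuleCat.ofHom (crossS k I J s t)
  naturality {t u} f := by
    apply ModuleCat.hom_ext
    apply LinearMap.ext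
    intro (x : intervalObj k I t)
    show crossS k I J s u (intervalMapAux k I t u x) =
      intervalMapAux k J (t + s) (u + s) (crossS k I J s t x)
    by_cases htI : t ∈ I
    · by_cases huJ : u + s ∈ J
      · have hiff := hcond (leOfHom f) htI huJ
        by_cases huI : u ∈ I
        · have htJ : t + s ∈ J := hiff.mp huI
          apply Subtype.ext
          rw [crossS_coe k huI huJ, intervalMapAux_coe k htI huI,
            intervalMapAux_coe k htJ huJ, crossS_coe k htI htJ]
        · have htJ : t + s ∉ J := fun h => huI (hiff.mpr h)
          rw [crossS_of_not k (fun h => huI h.1), crossS_of_not k (fun h => htJ h.2)]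
          simp
      · rw [crossS_of_not k (fun h => huJ h.2), intervalMapAux_of_not k (fun h => huJ h.2)]
    · rw [intervalObj_eq_zero k htI x]
      simp

/-- The component of the projection onto the cokernel interval module. -/
def piAux (hab : a < b) (s : ℝ) :
    (intervalModule k (Set.Ico a b) (.of_ordConnected Set.ordConnected_Ico) ⟶
      shiftFunctor' s ⋙ intervalModule k (Set.Iio c) (.of_ordConnected Set.ordConnected_Iio))
      →ₗ[k] intervalObj k (Set.Ico (c - b) (min (c - a) (d - b))) s where
  toFun α := ⟨if s ∈ Set.Ico (c - b) (min (c - a) (d - b)) then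
      (α.app a (gen k (memA a b hab))).1 else 0, by
    by_cases h : s ∈ Set.Ico (c - b) (min (c - a) (d - b))
    · rw [if_pos h, intervalObj, if_pos h]; trivial
    · rw [if_neg h, intervalObj, if_neg h]; exact Submodule.zero_mem ⊥⟩
  map_add' α β := by
    apply Subtype.ext
    show (if s ∈ Set.Ico (c - b) (min (c - a) (d - b)) then
        ((α + β).app a (gen k (memA a b hab))).1 else 0) =
      (if s ∈ Set.Ico (c - b) (min (c - a) (d - b)) then
        (α.app a (gen k (memA a b hab))).1 else 0) +
      (if s ∈ Set.Ico (c - b) (min (c - a) (d - b)) then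
        (β.app a (gen k (memA a b hab))).1 else 0)
    split_ifs with h
    · rw [NatTrans.app_add]; rfl
    · rw [add_zero]
  map_smul' r α := by
    apply Subtype.ext
    show (if s ∈ Set.Ico (c - b) (min (c - a) (d - b)) then
        ((r • α).app a (gen k (memA a b hab))).1 else 0) =
      r * (if s ∈ Set.Ico (c - b) (min (c - a) (d - b)) then
        (α.app a (gen k (memA a b hab))).1 else 0)
    split_ifs with h
    · rw [NatTrans.app_smul]; rfl
    · rw [mul_zero]

lemma piAux_coe (hab : a < b) (s : ℝ)
    (α : intervalModule k (Set.Ico a b) (.of_ordConnected Set.ordConnected_Ico) ⟶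
      shiftFunctor' s ⋙ intervalModule k (Set.Iio c) (.of_ordConnected Set.ordConnected_Iio)) :
    ((piAux k a b c d hab s α : intervalObj k (Set.Ico (c - b) (min (c - a) (d - b))) s) : k) =
      if s ∈ Set.Ico (c - b) (min (c - a) (d - b)) then
        (α.app a (gen k (memA a b hab))).1 else 0 := rfl


/-- The projection natural transformation onto the cokernel interval module. -/
def piN (hab : a < b) :
    homUnderline k (intervalModule k (Set.Ico a b) (.of_ordConnected Set.ordConnected_Ico))
      (intervalModule k (Set.Iio c) (.of_ordConnected Set.ordConnected_Iio)) ⟶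
    intervalModule k (Set.Ico (c - b) (min (c - a) (d - b)))
      (.of_ordConnected Set.ordConnected_Ico) where
  app s := ModuleCat.ofHom (piAux k a b c d hab s)
  naturality {s t} f := by
    apply ModuleCat.hom_ext
    apply LinearMap.ext
    intro α
    have hst : s ≤ t := leOfHom f
    show piAux k a b c d hab t ((homUnderline k _ _).map f α) =
      intervalMapAux k (Set.Ico (c - b) (min (c - a) (d - b))) s t (piAux k a b c d hab s α)
    by_cases ht : t ∈ Set.Ico (c - b) (min (c - a) (d - b))
    · by_cases hs : s ∈ Set.Ico (c - b) (min (c - a) (d - b))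
      · apply Subtype.ext
        rw [intervalMapAux_coe k hs ht]
        show (if t ∈ Set.Ico (c - b) (min (c - a) (d - b)) then
            (((homUnderline k (intervalModule k (Set.Ico a b)
              (.of_ordConnected Set.ordConnected_Ico))
              (intervalModule k (Set.Iio c)
              (.of_ordConnected Set.ordConnected_Iio))).map f α).app a
              (gen k (memA a b hab))).1 else 0) =
          (if s ∈ Set.Ico (c - b) (min (c - a) (d - b)) then
            ((α.app a (gen k (memA a b hab))).1) else 0)
        rw [if_pos ht, if_pos hs]
        have has : a + s ∈ Set.Iio c := by
          simp only [Set.mem_Iio]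
          have := hs.2
          have h2 := min_le_left (c - a) (d - b)
          linarith
        have hat : a + t ∈ Set.Iio c := by
          simp only [Set.mem_Iio]
          have := ht.2
          have h2 := min_le_left (c - a) (d - b)
          linarith
        exact intervalMapAux_coe k has hat (α.app a (gen k (memA a b hab)))
      · have hsm : s < min (c - a) (d - b) := lt_of_le_of_lt hst ht.2
        have hscb : s < c - b := by
          by_contra hge
          push_neg at hge
          exact hs ⟨hge, hsm⟩
        have hz : α.app a (gen k (memA a b hab)) = 0 :=
          app_gen_zero_of_lt k a b hab (by linarith : b + s < c) α
        have hpz : piAux k a b c d hab s α = 0 := by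
          apply Subtype.ext
          show (if s ∈ Set.Ico (c - b) (min (c - a) (d - b)) then
              ((α.app a (gen k (memA a b hab))).1) else 0) = 0
          rw [if_neg hs]
        rw [hpz, map_zero]
        apply Subtype.ext
        show (if t ∈ Set.Ico (c - b) (min (c - a) (d - b)) then
            (((homUnderline k (intervalModule k (Set.Ico a b)
              (.of_ordConnected Set.ordConnected_Ico))
              (intervalModule k (Set.Iio c)
              (.of_ordConnected Set.ordConnected_Iio))).map f α).app a
              (gen k (memA a b hab))).1 else 0) = 0
        rw [if_pos ht]
        have hmz : ((homUnderline k (intervalModule k (Set.Ico a b)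
            (.of_ordConnected Set.ordConnected_Ico))
            (intervalModule k (Set.Iio c)
            (.of_ordConnected Set.ordConnected_Iio))).map f α).app a
            (gen k (memA a b hab)) = 0 := by
          show intervalMapAux k (Set.Iio c) (a + s) (a + t)
            (α.app a (gen k (memA a b hab))) = 0
          rw [hz]
          exact map_zero _
        rw [hmz]
        rfl
    · apply Subtype.ext
      rw [intervalMapAux_of_not k (fun h => ht h.2)]
      show (if t ∈ Set.Ico (c - b) (min (c - a) (d - b)) then
          (((homUnderline k (intervalModule k (Set.Ico a b)
            (.of_ordConnected Set.ordConnected_Ico))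
            (intervalModule k (Set.Iio c)
            (.of_ordConnected Set.ordConnected_Iio))).map f α).app a
            (gen k (memA a b hab))).1 else 0) = ((0 : intervalObj k
              (Set.Ico (c - b) (min (c - a) (d - b))) t) : k)
      rw [if_neg ht]
      rfl

end PExt


end PExtAux
open CategoryTheory Limits in
/-- First graded Ext of interval modules, computed as the cokernel of the map obtained by
applying `Hom(k[a,b), −)` to the injective resolution
`0 → k[c,d) → k(−∞,d) → k(−∞,c) → 0`:
`Ext¹(k[a,b), k[c,d)) ≅ k[c−b, min{c−a, d−b})`. -/
theorem grExt_interval (k : Type) [Field k] (a b c d : ℝ) (hab : a < b) (hcd : c < d) :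
    Nonempty
      (cokernel (homUnderlineMap k
          (intervalModule k (Set.Ico a b) (.of_ordConnected Set.ordConnected_Ico))
          (intervalHom k (Set.Iio d) (Set.Iio c)
            (.of_ordConnected Set.ordConnected_Iio) (.of_ordConnected Set.ordConnected_Iio)
            (fun x y hxy _ hy =>
              iff_of_true (lt_trans hy hcd) (lt_of_le_of_lt hxy hy)))) ≅
        intervalModule k (Set.Ico (c - b) (min (c - a) (d - b)))
          (.of_ordConnected Set.ordConnected_Ico)) := by
  have hzero : homUnderlineMap k
      (intervalModule k (Set.Ico a b) (.of_ordConnected Set.ordConnected_Ico))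
      (intervalHom k (Set.Iio d) (Set.Iio c)
        (.of_ordConnected Set.ordConnected_Iio) (.of_ordConnected Set.ordConnected_Iio)
        (fun x y hxy _ hy =>
          iff_of_true (lt_trans hy hcd) (lt_of_le_of_lt hxy hy))) ≫
      PExt.piN k a b c d hab = 0 := by
    apply NatTrans.ext
    funext s
    apply ModuleCat.hom_ext
    apply LinearMap.ext
    intro α
    apply Subtype.ext
    show (if s ∈ Set.Ico (c - b) (min (c - a) (d - b)) then
        ((intervalCross k (Set.Iio d) (Set.Iio c) (a + s)
          (α.app a (PExt.gen k (PExt.memA a b hab)))) : k) else 0) = 0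
    by_cases h : s ∈ Set.Ico (c - b) (min (c - a) (d - b))
    · rw [if_pos h]
      have hsdb : s < d - b := lt_of_lt_of_le h.2 (min_le_right _ _)
      have hz : α.app a (PExt.gen k (PExt.memA a b hab)) = 0 :=
        PExt.app_gen_zero_of_lt k a b hab (by linarith : b + s < d) α
      rw [hz]
      exact congrArg Subtype.val (map_zero _)
    · rw [if_neg h]
  have hcolim : IsColimit (CokernelCofork.ofπ (PExt.piN k a b c d hab) hzero) := by
    apply evaluationJointlyReflectsColimits
    intro s
    refine (isColimitMapCoconeCoforkEquiv' ((evaluation ℝ (ModuleCat k)).obj s) hzero).symm ?_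
    let S : ShortComplex (ModuleCat k) := ShortComplex.mk
      ((homUnderlineMap k
        (intervalModule k (Set.Ico a b) (.of_ordConnected Set.ordConnected_Ico))
        (intervalHom k (Set.Iio d) (Set.Iio c)
          (.of_ordConnected Set.ordConnected_Iio) (.of_ordConnected Set.ordConnected_Iio)
          (fun x y hxy _ hy =>
            iff_of_true (lt_trans hy hcd) (lt_of_le_of_lt hxy hy)))).app s)
      ((PExt.piN k a b c d hab).app s)
      (by rw [← NatTrans.comp_app, hzero]; rfl)
    have hepi : Epi S.g := by
      rw [ModuleCat.epi_iff_surjective]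
      intro y
      by_cases h : s ∈ Set.Ico (c - b) (min (c - a) (d - b))
      · have has : a + s ∈ Set.Iio c := by
          simp only [Set.mem_Iio]
          have := h.2
          have h2 := min_le_left (c - a) (d - b)
          linarith
        have hcnd : ∀ ⦃x y' : ℝ⦄, x ≤ y' → x ∈ Set.Ico a b → y' + s ∈ Set.Iio c →
            (y' ∈ Set.Ico a b ↔ x + s ∈ Set.Iio c) := by
          intro x y' hxy hx hy'
          simp only [Set.mem_Iio] at hy' ⊢
          have h1 := h.1
          refine iff_of_true ⟨hx.1.trans hxy, by linarith⟩ (by linarith [hx.2])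
        refine ⟨(y.1 : k) • PExt.homShift k (Set.Ico a b) (Set.Iio c)
          (.of_ordConnected Set.ordConnected_Ico) (.of_ordConnected Set.ordConnected_Iio)
          s hcnd, ?_⟩
        apply Subtype.ext
        show (if s ∈ Set.Ico (c - b) (min (c - a) (d - b)) then
            ((((y.1 : k) • PExt.homShift k (Set.Ico a b) (Set.Iio c)
              (.of_ordConnected Set.ordConnected_Ico)
              (.of_ordConnected Set.ordConnected_Iio) s hcnd).app a
              (PExt.gen k (PExt.memA a b hab))).1) else 0) = (y.1 : k)
        rw [if_pos h]
        have hc : ((PExt.homShift k (Set.Ico a b) (Set.Iio c)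
            (.of_ordConnected Set.ordConnected_Ico)
            (.of_ordConnected Set.ordConnected_Iio) s hcnd).app a
            (PExt.gen k (PExt.memA a b hab))).1 = 1 := by
          show ((PExt.crossS k (Set.Ico a b) (Set.Iio c) s a)
            (PExt.gen k (PExt.memA a b hab)) : k) = 1
          rw [PExt.crossS_coe k (PExt.memA a b hab) has]
          rfl
        rw [NatTrans.app_smul]
        show (y.1 : k) * ((PExt.homShift k (Set.Ico a b) (Set.Iio c)
            (.of_ordConnected Set.ordConnected_Ico)
            (.of_ordConnected Set.ordConnected_Iio) s hcnd).app a
            (PExt.gen k (PExt.memA a b hab))).1 = (y.1 : k)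
        rw [hc, mul_one]
      · refine ⟨0, ?_⟩
        rw [map_zero]
        exact (intervalObj_eq_zero k h y).symm
    have hex : S.Exact := by
      rw [ShortComplex.moduleCat_exact_iff]
      intro α hα
      have hαcoe : (if s ∈ Set.Ico (c - b) (min (c - a) (d - b)) then
          ((α.app a (PExt.gen k (PExt.memA a b hab))).1) else 0) = 0 :=
        congrArg Subtype.val hα
      by_cases h1 : s < c - b
      · refine ⟨0, ?_⟩
        rw [map_zero,
          PExt.natTrans_eq_zero k a b hab α
            (PExt.app_gen_zero_of_lt k a b hab (by linarith : b + s < c) α)]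
        rfl
      · push_neg at h1
        by_cases h2 : c - a ≤ s
        · refine ⟨0, ?_⟩
          have hmem : a + s ∉ Set.Iio c := by
            simp only [Set.mem_Iio, not_lt]; linarith
          have hz : α.app a (PExt.gen k (PExt.memA a b hab)) = 0 :=
            intervalObj_eq_zero k hmem _
          rw [map_zero, PExt.natTrans_eq_zero k a b hab α hz]
          rfl
        · push_neg at h2
          by_cases h3 : s < d - b
          · refine ⟨0, ?_⟩
            have hmem : s ∈ Set.Ico (c - b) (min (c - a) (d - b)) := ⟨h1, lt_min h2 h3⟩
            have hz : α.app a (PExt.gen k (PExt.memA a b hab)) = 0 := by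
              apply Subtype.ext
              have := hαcoe
              rw [if_pos hmem] at this
              exact this
            rw [map_zero, PExt.natTrans_eq_zero k a b hab α hz]
            rfl
          · push_neg at h3
            have hasd : a + s ∈ Set.Iio d := by
              simp only [Set.mem_Iio]; linarith
            have hasc : a + s ∈ Set.Iio c := by
              simp only [Set.mem_Iio]; linarith
            have hcnd : ∀ ⦃x y : ℝ⦄, x ≤ y → x ∈ Set.Ico a b → y + s ∈ Set.Iio d →
                (y ∈ Set.Ico a b ↔ x + s ∈ Set.Iio d) := by
              intro x y hxy hx hy
              simp only [Set.mem_Iio] at hy ⊢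
              refine iff_of_true ⟨hx.1.trans hxy, by linarith⟩ (by linarith [hx.2])
            set r : k := (α.app a (PExt.gen k (PExt.memA a b hab))).1 with hr
            refine ⟨r • PExt.homShift k (Set.Ico a b) (Set.Iio d)
              (.of_ordConnected Set.ordConnected_Ico)
              (.of_ordConnected Set.ordConnected_Iio) s hcnd, ?_⟩
            rw [← sub_eq_zero]
            apply PExt.natTrans_eq_zero k a b hab
            show ((S.f (r • PExt.homShift k (Set.Ico a b) (Set.Iio d)
                (.of_ordConnected Set.ordConnected_Ico)
                (.of_ordConnected Set.ordConnected_Iio) s hcnd)).app a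
                (PExt.gen k (PExt.memA a b hab))) - α.app a (PExt.gen k (PExt.memA a b hab)) = 0
            rw [sub_eq_zero]
            apply Subtype.ext
            have e1 : (S.f (r • PExt.homShift k (Set.Ico a b) (Set.Iio d)
                (.of_ordConnected Set.ordConnected_Ico)
                (.of_ordConnected Set.ordConnected_Iio) s hcnd)).app a
                (PExt.gen k (PExt.memA a b hab)) =
                intervalCross k (Set.Iio d) (Set.Iio c) (a + s)
                  (r • (PExt.crossS k (Set.Ico a b) (Set.Iio d) s a
                    (PExt.gen k (PExt.memA a b hab)))) := rfl
            rw [e1]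
            refine (intervalCross_coe k hasd hasc _).trans ?_
            show r * ((PExt.crossS k (Set.Ico a b) (Set.Iio d) s a
              (PExt.gen k (PExt.memA a b hab))) : k) = r
            rw [PExt.crossS_coe k (PExt.memA a b hab) hasd]
            show r * 1 = r
            rw [mul_one]
    letI := hepi
    exact hex.gIsCokernel
  exact ⟨IsColimit.coconePointUniqueUpToIso (cokernelIsCokernel _) hcolim⟩
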